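/- (Path extension with disjoint boxes) Let d ≥ 1, k ≥ 1, A > 0, and suppose x ∈ ℤ^d with |x|_∞ > nA√k for some integer n ≥ 1. If 0 is connected to x in ℤ^d by an open path of length at most k, then there exist x_0 = 0, x_1, …, x_{n-1} with x_i ∈ ∂Q_{A√k}(x_{i-1}) for each i, such that the events {x_{i-1} is connected to x_i by an open path of length ≤ k inside Q_{A√k}(x_{i-1})} for i = 1,…,n−1, and {x_{n-1} ↔ x}, all occur disjointly (i.e., their disjoint occurrence holds). -/

import Mathlib

/- STATEMENT 16 (path extension with disjoint boxes): if `|x|_∞ > n A √k` and `0` is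
connected to `x` by an open path of length at most `k`, then there are points
`x_0 = 0, x_1, …, x_{n-1}` with `x_i ∈ ∂Q_{A√k}(x_{i-1})` and pairwise edge-disjoint
open paths: one of length `≤ k` inside `Q_{A√k}(x_{i-1})` from `x_{i-1}` to `x_i` for
each `i = 1, …, n-1`, and one from `x_{n-1}` to `x`. -/

/-- Nearest-neighbor adjacency on `ℤ^d`. -/
def latAdj (d : ℕ) (x y : Fin d → ℤ) : Prop :=
  ∃ i, (y i = x i + 1 ∨ y i = x i - 1) ∧ ∀ j, j ≠ i → y j = x j


namespace Stmt16aux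

def NN {d : ℕ} (z : Fin d → ℤ) : ℕ := Finset.univ.sup fun i => (z i).natAbs

lemma norm_eq {d : ℕ} (z : Fin d → ℤ) : ‖z‖ = (NN z : ℝ) := by
  rw [Pi.norm_def]
  have h : ((NN z : ℕ) : NNReal) = Finset.univ.sup fun b => ‖z b‖₊ := by
    rw [NN, Finset.comp_sup_eq_sup_comp (Nat.cast : ℕ → NNReal)]
    · congr 1; funext i; change ((z i).natAbs : NNReal) = _; simp [NNReal.natCast_natAbs]
    · intro a b; exact Nat.cast_max a b
    · simp
  rw [← h]; norm_cast

lemma NN_zero {d : ℕ} : NN (0 : Fin d → ℤ) = 0 := by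
  refine le_antisymm (Finset.sup_le fun i _ => ?_) (Nat.zero_le _)
  simp

lemma coord_le {d : ℕ} (z : Fin d → ℤ) (i : Fin d) : (z i).natAbs ≤ NN z :=
  Finset.le_sup (f := fun i => (z i).natAbs) (Finset.mem_univ i)

lemma NN_triangle {d : ℕ} (u v : Fin d → ℤ) : NN u ≤ NN (u - v) + NN v := by
  refine Finset.sup_le fun i _ => ?_
  have h1 := coord_le (u - v) i
  have h2 := coord_le v i
  have : (u i).natAbs ≤ ((u - v) i).natAbs + (v i).natAbs := by
    simp only [Pi.sub_apply]; omega
  omega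

lemma step_bound {d : ℕ} {a b : Fin d → ℤ} (h : latAdj d a b) (c : Fin d → ℤ) :
    NN (b - c) ≤ NN (a - c) + 1 := by
  obtain ⟨i0, hi0, hoth⟩ := h
  refine Finset.sup_le fun i _ => ?_
  have hc := coord_le (a - c) i
  simp only [Pi.sub_apply] at hc ⊢
  by_cases hii : i = i0
  · subst hii; rcases hi0 with h | h <;> rw [h] <;> omega
  · rw [hoth i hii]; omega

lemma erase (d : ℕ) (op : Sym2 (Fin d → ℤ) → Bool) :
    ∀ M : ℕ, ∀ f : ℕ → Fin d → ℤ,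
      (∀ i < M, latAdj d (f i) (f (i + 1)) ∧ op s(f i, f (i + 1)) = true) →
      ∃ (f' : ℕ → Fin d → ℤ) (M' : ℕ), M' ≤ M ∧ f' 0 = f 0 ∧ f' M' = f M ∧
        (∀ i < M', latAdj d (f' i) (f' (i + 1)) ∧ op s(f' i, f' (i + 1)) = true) ∧
        (∀ a ≤ M', ∀ b ≤ M', f' a = f' b → a = b) := by
  intro M
  induction M using Nat.strong_induction_on with
  | _ M ih =>
    intro f hf
    by_cases hrep : ∃ a b, a < b ∧ b ≤ M ∧ f a = f b
    · obtain ⟨a, b, hab, hbM, hfab⟩ := hrep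
      set f'' : ℕ → Fin d → ℤ := fun j => f (if j ≤ a then j else j + (b - a)) with hf''
      have hMM : M - (b - a) < M := by omega
      have hsteps : ∀ i < M - (b - a),
          latAdj d (f'' i) (f'' (i + 1)) ∧ op s(f'' i, f'' (i + 1)) = true := by
        intro i hi
        by_cases h1 : i + 1 ≤ a
        · have h2 : i ≤ a := by omega
          simpa [hf'', h1, h2] using hf i (by omega)
        · by_cases h2 : i ≤ a
          · have hia : i = a := by omega
            have e1 : f'' i = f b := by simp [hf'', h2, hia, hfab]
            have e2 : f'' (i + 1) = f (b + 1) := by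
              have h3 : i + 1 + (b - a) = b + 1 := by omega
              simp [hf'', h1, h3]
            rw [e1, e2]
            exact hf b (by omega)
          · have e1 : f'' i = f (i + (b - a)) := by simp [hf'', h2]
            have e2 : f'' (i + 1) = f (i + (b - a) + 1) := by
              have h3 : i + 1 + (b - a) = i + (b - a) + 1 := by omega
              simp [hf'', h1, h3]
            rw [e1, e2]
            exact hf (i + (b - a)) (by omega)
      obtain ⟨f', M', h1, h2, h3, h4, h5⟩ := ih (M - (b - a)) hMM f'' hsteps
      refine ⟨f', M', by omega, by simpa [hf''] using h2, ?_, h4, h5⟩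
      rw [h3]
      by_cases h : M - (b - a) ≤ a
      · have hMb : M = b := by omega
        have he : M - (b - a) = a := by omega
        show f (if M - (b - a) ≤ a then M - (b - a) else M - (b - a) + (b - a)) = f M
        rw [if_pos h, he, hfab, hMb]
      · have he : M - (b - a) + (b - a) = M := by omega
        show f (if M - (b - a) ≤ a then M - (b - a) else M - (b - a) + (b - a)) = f M
        rw [if_neg h, he]
    · push_neg at hrep
      refine ⟨f, M, le_refl _, rfl, rfl, hf, fun p hp q hq hpq => ?_⟩
      rcases lt_trichotomy p q with h | h | h
      · exact absurd hpq (hrep p q h hq)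
      · exact h
      · exact absurd hpq.symm (hrep q p h hp)

end Stmt16aux

theorem stmt16 (d k n : ℕ) (hk : 1 ≤ k) (hn : 1 ≤ n) (A : ℝ) (hA : 0 < A)
    (op : Sym2 (Fin d → ℤ) → Bool) (x : Fin d → ℤ)
    (hx : (n : ℝ) * A * Real.sqrt k < ‖x‖)
    (hconn : ∃ (f : ℕ → Fin d → ℤ) (m : ℕ), m ≤ k ∧ f 0 = 0 ∧ f m = x ∧
      ∀ i < m, latAdj d (f i) (f (i + 1)) ∧ op s(f i, f (i + 1)) = true) :
    ∃ (y : ℕ → Fin d → ℤ) (g : ℕ → ℕ → Fin d → ℤ) (m : ℕ → ℕ),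
      y 0 = 0 ∧
      (∀ i < n - 1, ‖y (i + 1) - y i‖ = ((⌊A * Real.sqrt k⌋ : ℤ) : ℝ)) ∧
      (∀ i < n - 1, m i ≤ k ∧ g i 0 = y i ∧ g i (m i) = y (i + 1) ∧
        (∀ j ≤ m i, ‖g i j - y i‖ ≤ A * Real.sqrt k) ∧
        ∀ j < m i, latAdj d (g i j) (g i (j + 1)) ∧ op s(g i j, g i (j + 1)) = true) ∧
      (g (n - 1) 0 = y (n - 1) ∧ g (n - 1) (m (n - 1)) = x ∧
        ∀ j < m (n - 1), latAdj d (g (n - 1) j) (g (n - 1) (j + 1)) ∧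
          op s(g (n - 1) j, g (n - 1) (j + 1)) = true) ∧
      (∀ i ≤ n - 1, ∀ i' ≤ n - 1, i ≠ i' → ∀ j < m i, ∀ j' < m i',
        s(g i j, g i (j + 1)) ≠ s(g i' j', g i' (j' + 1))) := by
  classical
  open Stmt16aux in
  obtain ⟨f0, M0, hM0k, hf00, hf0M, hstep0⟩ := hconn
  obtain ⟨f, M, hMM0, hfeq0, hfeqM, hstep, hinj⟩ := Stmt16aux.erase d op M0 f0 hstep0
  have hMk : M ≤ k := le_trans hMM0 hM0k
  have hf0 : f 0 = 0 := by rw [hfeq0, hf00]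
  have hfM : f M = x := by rw [hfeqM, hf0M]
  clear hfeq0 hfeqM hstep0 hf00 hf0M
  set r : ℕ := (⌊A * Real.sqrt k⌋).toNat with hr
  have hsk : (1 : ℝ) ≤ Real.sqrt k := by
    rw [show (1:ℝ) = Real.sqrt 1 by simp]
    exact Real.sqrt_le_sqrt (by exact_mod_cast hk)
  have hAk : 0 < A * Real.sqrt k := by positivity
  have hfloor : ((r : ℕ) : ℝ) = ((⌊A * Real.sqrt k⌋ : ℤ) : ℝ) := by
    rw [hr]
    norm_cast
    exact Int.toNat_of_nonneg (Int.floor_nonneg.2 hAk.le)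
  have hrle : (r : ℝ) ≤ A * Real.sqrt k := by
    rw [hfloor]; exact Int.floor_le _
  have hNx : n * r + 1 ≤ Stmt16aux.NN x := by
    have h1 : ((n * r : ℕ) : ℝ) < ((Stmt16aux.NN x : ℕ) : ℝ) := by
      push_cast
      calc (n : ℝ) * r ≤ n * (A * Real.sqrt k) := by
            apply mul_le_mul_of_nonneg_left hrle (by positivity)
        _ < Stmt16aux.NN x := by rw [← mul_assoc, ← Stmt16aux.norm_eq]; exact hx
    exact_mod_cast h1
  -- the "next exit" map
  set nxt : ℕ → ℕ := fun c =>
    if h : ∃ δ, r < Stmt16aux.NN (f (c + δ) - f c) ∧ c + δ ≤ M then c + Nat.find h - 1 else c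
    with hnxt
  set t : ℕ → ℕ := fun i => nxt^[i] 0 with ht
  have ht0 : t 0 = 0 := rfl
  have htsucc : ∀ i, t (i + 1) = nxt (t i) := by
    intro i; rw [ht]; exact Function.iterate_succ_apply' nxt i 0
  -- step lemma
  have hstepc : ∀ c, c ≤ M → r < Stmt16aux.NN (x - f c) →
      c ≤ nxt c ∧ nxt c < M ∧ Stmt16aux.NN (f (nxt c) - f c) = r ∧
      (∀ u, c ≤ u → u ≤ nxt c → Stmt16aux.NN (f u - f c) ≤ r) := by
    intro c hcM hcx
    have hex : ∃ δ, r < Stmt16aux.NN (f (c + δ) - f c) ∧ c + δ ≤ M := by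
      refine ⟨M - c, ?_, by omega⟩
      rw [show c + (M - c) = M by omega, hfM]
      exact hcx
    have hnc : nxt c = c + Nat.find hex - 1 := by rw [hnxt]; exact dif_pos hex
    have hfind_le : Nat.find hex ≤ M - c := by
      apply Nat.find_le
      refine ⟨?_, by omega⟩
      rw [show c + (M - c) = M by omega, hfM]
      exact hcx
    have hfind_pos : 1 ≤ Nat.find hex := by
      by_contra h
      have h0 : Nat.find hex = 0 := by omega
      have := Nat.find_spec hex
      rw [h0] at this
      simp [Stmt16aux.NN_zero] at this
    have hle : c ≤ nxt c := by omega
    have hltM : nxt c < M := by omega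
    have hall : ∀ u, c ≤ u → u ≤ nxt c → Stmt16aux.NN (f u - f c) ≤ r := by
      intro u hcu hun
      have hmin := Nat.find_min hex (m := u - c) (by omega)
      rw [show c + (u - c) = u by omega] at hmin
      by_contra hcon
      exact hmin ⟨Nat.lt_of_not_le hcon, by omega⟩
    refine ⟨hle, hltM, le_antisymm (hall _ hle (le_refl _)) ?_, hall⟩
    have hspec := (Nat.find_spec hex).1
    rw [show c + Nat.find hex = nxt c + 1 by omega] at hspec
    have hadj := (hstep (nxt c) hltM).1
    have := Stmt16aux.step_bound hadj (f c)
    omega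
  -- key condition
  have hcondl : ∀ i, i < n - 1 → Stmt16aux.NN (f (t i)) ≤ i * r →
      r < Stmt16aux.NN (x - f (t i)) := by
    intro i hi hNi
    have htri := Stmt16aux.NN_triangle x (f (t i))
    have hmul : i * r + r ≤ n * r := by
      have h2 : i + 1 ≤ n := by omega
      calc i * r + r = (i + 1) * r := (Nat.succ_mul i r).symm
        _ ≤ n * r := Nat.mul_le_mul_right r h2
    omega
  -- invariant
  have hinv : ∀ i, i ≤ n - 1 → t i ≤ M ∧ Stmt16aux.NN (f (t i)) ≤ i * r := by
    intro i
    induction i with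
    | zero =>
      intro _
      rw [ht0]
      refine ⟨Nat.zero_le _, ?_⟩
      rw [hf0, Stmt16aux.NN_zero]
      exact Nat.zero_le _
    | succ i ihi =>
      intro hi
      have hprev := ihi (by omega)
      have hcond := hcondl i (by omega) hprev.2
      obtain ⟨h1, h2, h3, h4⟩ := hstepc (t i) hprev.1 hcond
      rw [htsucc]
      refine ⟨by omega, ?_⟩
      have htri := Stmt16aux.NN_triangle (f (nxt (t i))) (f (t i))
      have : (i + 1) * r = i * r + r := Nat.succ_mul i r
      omega
  -- one-step properties for i < n - 1
  have hmono : ∀ i, i < n - 1 → t i ≤ t (i + 1) ∧ t (i + 1) < M ∧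
      Stmt16aux.NN (f (t (i + 1)) - f (t i)) = r ∧
      (∀ u, t i ≤ u → u ≤ t (i + 1) → Stmt16aux.NN (f u - f (t i)) ≤ r) := by
    intro i hi
    have hprev := hinv i (by omega)
    have hcond := hcondl i hi hprev.2
    rw [htsucc]
    exact hstepc (t i) hprev.1 hcond
  -- chain monotonicity
  have hchain : ∀ a b, a ≤ b → b ≤ n - 1 → t a ≤ t b := by
    intro a b hab hb
    induction b with
    | zero =>
      have ha : a = 0 := by omega
      rw [ha]
    | succ b ihb =>
      rcases Nat.lt_or_ge a (b + 1) with h | h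
      · exact le_trans (ihb (by omega) (by omega)) (hmono b (by omega)).1
      · have ha : a = b + 1 := by omega
        rw [ha]
  refine ⟨fun i => f (t i), fun i j => f (t i + j),
    fun i => if i < n - 1 then t (i + 1) - t i else M - t (n - 1), ?_, ?_, ?_, ?_, ?_⟩
  · beta_reduce
    rw [ht0, hf0]
  · intro i hi
    beta_reduce
    rw [Stmt16aux.norm_eq, (hmono i hi).2.2.1, hfloor]
  · intro i hi
    beta_reduce
    obtain ⟨h1, h2, h3, h4⟩ := hmono i hi
    rw [if_pos hi]
    refine ⟨by omega, by rw [Nat.add_zero], ?_, ?_, ?_⟩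
    · rw [show t i + (t (i + 1) - t i) = t (i + 1) by omega]
    · intro j hj
      rw [Stmt16aux.norm_eq]
      calc ((Stmt16aux.NN (f (t i + j) - f (t i)) : ℕ) : ℝ)
          ≤ (r : ℝ) := by exact_mod_cast h4 (t i + j) (by omega) (by omega)
        _ ≤ A * Real.sqrt k := hrle
    · intro j hj
      exact hstep (t i + j) (by omega)
  · beta_reduce
    have hne : ¬ (n - 1 < n - 1) := lt_irrefl _
    rw [if_neg hne]
    have htM : t (n - 1) ≤ M := (hinv (n - 1) (le_refl _)).1
    refine ⟨by rw [Nat.add_zero], ?_, ?_⟩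
    · rw [show t (n - 1) + (M - t (n - 1)) = M by omega, hfM]
    · intro j hj
      exact hstep (t (n - 1) + j) (by omega)
  · beta_reduce
    intro i hi i' hi' hne j hj j' hj'
    have htM : t (n - 1) ≤ M := (hinv (n - 1) (le_refl _)).1
    -- bounds on indices
    have hub : ∀ p, p ≤ n - 1 → ∀ q, q < (if p < n - 1 then t (p + 1) - t p else M - t (n - 1)) →
        t p + q + 1 ≤ M := by
      intro p hp q hq
      by_cases h : p < n - 1
      · rw [if_pos h] at hq
        have := (hmono p h).2.1
        omega
      · rw [if_neg h] at hq
        have : p = n - 1 := by omega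
        rw [this]
        omega
    have hlt : ∀ p q, p < q → q ≤ n - 1 →
        ∀ jp, jp < (if p < n - 1 then t (p + 1) - t p else M - t (n - 1)) →
        t p + jp < t q := by
      intro p q hpq hq jp hjp
      have hp : p < n - 1 := by omega
      rw [if_pos hp] at hjp
      have h1 : t p + jp < t (p + 1) := by
        have := (hmono p hp).1; omega
      exact lt_of_lt_of_le h1 (hchain (p + 1) q (by omega) hq)
    have hju := hub i hi j hj
    have hju' := hub i' hi' j' hj'
    have huu : t i + j ≠ t i' + j' := by
      rcases lt_or_gt_of_ne hne with h | h
      · have := hlt i i' h hi' j hj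
        have h2 : t i' ≤ t i' + j' := Nat.le_add_right _ _
        omega
      · have := hlt i' i h hi j' hj'
        have h2 : t i ≤ t i + j := Nat.le_add_right _ _
        omega
    intro hcon
    rw [Sym2.eq_iff] at hcon
    rcases hcon with ⟨e1, e2⟩ | ⟨e1, e2⟩
    · exact huu (hinj (t i + j) (by omega) (t i' + j') (by omega) e1)
    · have u1 := hinj (t i + j) (by omega) (t i' + j' + 1) (by omega) e1
      have u2 := hinj (t i + j + 1) (by omega) (t i' + j') (by omega) e2
      omega
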